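/- For every real A with π/3 < A ≤ π/2, the two real numbers y₁ = (1/2)·(1 − √(1 − 2·cos A)/tan(A/2)) and y₂ = (1/2)·(1 + √(1 − 2·cos A)/tan(A/2)) are exactly the roots of the quadratic equation 2·(1 − cos A)·y² − 2·(1 − cos A)·y + (cos A)² = 0, and they satisfy y₁ < sin(A/2) < y₂ ≤ 1. In particular, exactly one of the two roots is at least sin(A/2), and the largest root does not exceed 1. -/

import Mathlib

open Real

lemma stmt6_aux (s c2 D : ℝ) (hs : 1/2 < s) (hs2 : s ^ 2 ≤ 1/2) (hc2pos : 0 < c2)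
    (hD0 : 0 ≤ D) (hsq : (D * c2) ^ 2 = (4 * s ^ 2 - 1) * (1 - s ^ 2)) :
    D * c2 ≤ s ∧ (2 * s - 1) * s < D * c2 := by
  have hspos : (0:ℝ) < s := by linarith
  have hDc2nn : 0 ≤ D * c2 := mul_nonneg hD0 hc2pos.le
  constructor
  · nlinarith [hsq, sq_nonneg (2 * s ^ 2 - 1), hDc2nn, hs]
  · have haux : 4 * s ^ 3 ≤ 2 * s := by
      nlinarith [mul_nonneg hspos.le (show (0:ℝ) ≤ 1 - 2 * s ^ 2 by linarith)]
    nlinarith [hsq, haux, hs, hDc2nn]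

/-- For `π/3 < A ≤ π/2`, the numbers
`y₁ = (1/2)(1 − √(1 − 2 cos A)/tan(A/2))` and `y₂ = (1/2)(1 + √(1 − 2 cos A)/tan(A/2))`
are exactly the roots of `2(1 − cos A)y² − 2(1 − cos A)y + cos²A = 0`, and they satisfy
`y₁ < sin(A/2) < y₂ ≤ 1`. -/
theorem stmt6 (A : ℝ) (h1 : π / 3 < A) (h2 : A ≤ π / 2)
    (y₁ y₂ : ℝ)
    (hy₁ : y₁ = (1/2) * (1 - Real.sqrt (1 - 2 * Real.cos A) / Real.tan (A / 2)))
    (hy₂ : y₂ = (1/2) * (1 + Real.sqrt (1 - 2 * Real.cos A) / Real.tan (A / 2))) :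
    (∀ y : ℝ,
        2 * (1 - Real.cos A) * y ^ 2 - 2 * (1 - Real.cos A) * y + (Real.cos A) ^ 2 = 0
          ↔ y = y₁ ∨ y = y₂) ∧
      y₁ < Real.sin (A / 2) ∧ Real.sin (A / 2) < y₂ ∧ y₂ ≤ 1 := by
  have hpi : (0:ℝ) < π := Real.pi_pos
  have hA2lo : π / 6 < A / 2 := by linarith
  have hA2hi : A / 2 ≤ π / 4 := by linarith
  set s : ℝ := Real.sin (A / 2) with hs_def
  set c2 : ℝ := Real.cos (A / 2) with hc2_def
  have hmem1 : π / 6 ∈ Set.Icc (-(π/2)) (π/2) := by constructor <;> linarith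
  have hmem2 : A / 2 ∈ Set.Icc (-(π/2)) (π/2) := by constructor <;> linarith
  have hmem3 : π / 4 ∈ Set.Icc (-(π/2)) (π/2) := by constructor <;> linarith
  have hs : 1/2 < s := by
    have := Real.strictMonoOn_sin hmem1 hmem2 hA2lo
    rwa [Real.sin_pi_div_six] at this
  have hsle : s ≤ Real.sqrt 2 / 2 := by
    have := Real.strictMonoOn_sin.monotoneOn hmem2 hmem3 hA2hi
    rwa [Real.sin_pi_div_four] at this
  have hs2 : s ^ 2 ≤ 1/2 := by
    have h2' : (Real.sqrt 2) ^ 2 = 2 := Real.sq_sqrt (by norm_num)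
    nlinarith [hs, hsle]
  have hc2pos : 0 < c2 := Real.cos_pos_of_mem_Ioo ⟨by linarith, by linarith⟩
  have hpyth : s ^ 2 + c2 ^ 2 = 1 := Real.sin_sq_add_cos_sq (A / 2)
  have hc2sq : c2 ^ 2 = 1 - s ^ 2 := by linarith
  have hcA : Real.cos A = 1 - 2 * s ^ 2 := by
    have : A = 2 * (A / 2) := by ring
    rw [this, Real.cos_two_mul']
    linarith
  set D : ℝ := Real.sqrt (1 - 2 * Real.cos A) with hD_def
  set t : ℝ := Real.tan (A / 2) with ht_def
  have hD0 : 0 ≤ D := Real.sqrt_nonneg _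
  have hDsq : D ^ 2 = 4 * s ^ 2 - 1 := by
    rw [hD_def, Real.sq_sqrt (by nlinarith), hcA]; ring
  have ht : t * c2 = s := by
    rw [ht_def, Real.tan_eq_sin_div_cos]
    field_simp
    rw [← hs_def, ← hc2_def]
    exact mul_div_cancel_right₀ s hc2pos.ne'
  have htpos : 0 < t := by
    rw [ht_def, Real.tan_eq_sin_div_cos]
    exact div_pos (by linarith) hc2pos
  have hus : (D / t) * s = D * c2 := by
    rw [div_mul_eq_mul_div, div_eq_iff htpos.ne']
    linear_combination (-D) * ht
  -- quadratic coefficients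
  have hsum : y₁ + y₂ = 1 := by rw [hy₁, hy₂]; ring
  have hu2 : (D / t) ^ 2 * s ^ 2 = (4 * s ^ 2 - 1) * (1 - s ^ 2) := by
    linear_combination (D / t * s + D * c2) * hus + c2 ^ 2 * hDsq + (4 * s ^ 2 - 1) * hc2sq
  have hspos : (0:ℝ) < s := by linarith
  have ht2 : t ^ 2 * (1 - s ^ 2) = s ^ 2 := by
    linear_combination (t * c2 + s) * ht - t ^ 2 * hc2sq
  have hprod : 2 * (1 - Real.cos A) * (y₁ * y₂) = Real.cos A ^ 2 := by
    rw [hy₁, hy₂, hcA]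
    have hsne : s ≠ 0 := ne_of_gt hspos
    field_simp
    linear_combination (-(2 * s ^ 2)) * hDsq + (2 * (4 * s ^ 2 - 1)) * ht2
  have hne : 2 * (1 - Real.cos A) ≠ 0 := by
    have : 0 < 2 * (1 - Real.cos A) := by rw [hcA]; nlinarith [hs]
    exact ne_of_gt this
  clear_value s c2 D t
  clear hD_def ht_def hs_def hc2_def
  -- key inequalities
  have hsq : (D * c2) ^ 2 = (4 * s ^ 2 - 1) * (1 - s ^ 2) := by
    linear_combination c2 ^ 2 * hDsq + (4 * s ^ 2 - 1) * hc2sq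
  obtain ⟨hDc2, hDc2'⟩ := stmt6_aux s c2 D hs hs2 hc2pos hD0 hsq
  have hu_nonneg : 0 ≤ D / t := div_nonneg hD0 htpos.le
  have hu_gt : 2 * s - 1 < D / t := by
    have h' : (2 * s - 1) * s < (D / t) * s := by rw [hus]; exact hDc2'
    exact lt_of_mul_lt_mul_right h' hspos.le
  have hu_le : D / t ≤ 1 := by
    have h' : (D / t) * s ≤ 1 * s := by rw [hus, one_mul]; exact hDc2
    exact le_of_mul_le_mul_right h' hspos
  refine ⟨?_, ?_, ?_, ?_⟩
  · intro y
    have key : 2 * (1 - Real.cos A) * y ^ 2 - 2 * (1 - Real.cos A) * y + Real.cos A ^ 2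
        = 2 * (1 - Real.cos A) * ((y - y₁) * (y - y₂)) := by
      linear_combination 2 * (1 - Real.cos A) * y * hsum - hprod
    rw [key]
    constructor
    · intro h
      rcases mul_eq_zero.mp h with h' | h'
      · exact absurd h' hne
      · rcases mul_eq_zero.mp h' with h'' | h''
        · left; linarith
        · right; linarith
    · rintro (rfl | rfl) <;> ring
  · rw [hy₁]; linarith
  · rw [hy₂]; linarith
  · rw [hy₂]; linarith
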